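/- Let T > 0 and let {X(t)}_{t∈[0,T]} and {φ_t} be an evolving family of Banach spaces as in the context, with X₀ separable. For each f in the continuous dual X₀*, the function t ↦ ‖(φ_t^{-1})^* f‖_{X(t)^*} is measurable on [0,T], where (φ_t^{-1})^* : X₀* → X(t)^* denotes the Banach-space adjoint (transpose) of φ_t^{-1} : X(t) → X₀. -/

import Mathlib

open MeasureTheory

/-- For separable `X₀` and each `f ∈ X₀*`, the function
`t ↦ ‖(φ_t^{-1})^* f‖_{X(t)^*}` is measurable on `[0,T]`, where the adjoint
`(φ_t^{-1})^* : X₀* → X(t)^*` is given by composition: `(φ_t^{-1})^* f = f ∘ φ_t^{-1}`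
(Remark 2.6 on the dual operator). -/
theorem dual_norm_measurable
    (T : ℝ) (hT : 0 < T)
    (X : ℝ → Type*) [∀ t, NormedAddCommGroup (X t)] [∀ t, NormedSpace ℝ (X t)]
    [∀ t, CompleteSpace (X t)]
    [TopologicalSpace.SeparableSpace (X 0)]
    (φ : ∀ t : ℝ, X 0 ≃L[ℝ] X t)
    (hφ0 : φ 0 = ContinuousLinearEquiv.refl ℝ (X 0))
    (C : ℝ) (hC : 1 ≤ C)
    (hfwd : ∀ t ∈ Set.Icc (0:ℝ) T, ∀ v : X 0, ‖φ t v‖ ≤ C * ‖v‖)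
    (hbwd : ∀ t ∈ Set.Icc (0:ℝ) T, ∀ w : X t, ‖(φ t).symm w‖ ≤ C * ‖w‖)
    (hmeas : ∀ v : X 0, Measurable fun t => ‖φ t v‖)
    (f : StrongDual ℝ (X 0)) :
    Measurable (fun t : Set.Icc (0:ℝ) T =>
      ‖f.comp ((φ (t : ℝ)).symm.toContinuousLinearMap)‖) := by
  haveI : Nonempty (X 0) := ⟨0⟩
  set u : ℕ → X 0 := TopologicalSpace.denseSeq (X 0) with hu
  have hdense : DenseRange u := TopologicalSpace.denseRange_denseSeq (X 0)
  -- the family of quotients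
  set q : ℕ → Set.Icc (0:ℝ) T → ℝ :=
    fun n t => ‖f (u n)‖ / ‖φ (t : ℝ) (u n)‖ with hq
  have hqmeas : ∀ n, Measurable (q n) := by
    intro n
    exact (measurable_const.div ((hmeas (u n)).comp measurable_subtype_coe))
  -- key pointwise bound: each quotient is at most the operator norm
  have hbound : ∀ (t : Set.Icc (0:ℝ) T) (v : X 0),
      ‖f v‖ / ‖φ (t : ℝ) v‖ ≤ ‖f.comp ((φ (t : ℝ)).symm.toContinuousLinearMap)‖ := by
    intro t v
    set G := f.comp ((φ (t : ℝ)).symm.toContinuousLinearMap) with hG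
    by_cases hv : φ (t : ℝ) v = 0
    · have hv0 : v = 0 := by
        have := (φ (t : ℝ)).injective (by simpa using hv)
        simpa using this
      simp [hv0, norm_nonneg]
    · have hpos : 0 < ‖φ (t : ℝ) v‖ := norm_pos_iff.mpr hv
      rw [div_le_iff₀ hpos]
      have : G (φ (t : ℝ) v) = f v := by
        simp [hG]
      calc ‖f v‖ = ‖G (φ (t : ℝ) v)‖ := by rw [this]
        _ ≤ ‖G‖ * ‖φ (t : ℝ) v‖ := G.le_opNorm _
  -- the op norm is the LUB of the quotients over the dense sequence
  have hislub : ∀ t : Set.Icc (0:ℝ) T,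
      IsLUB (Set.range fun n => q n t)
        ‖f.comp ((φ (t : ℝ)).symm.toContinuousLinearMap)‖ := by
    intro t
    set G := f.comp ((φ (t : ℝ)).symm.toContinuousLinearMap) with hG
    constructor
    · rintro x ⟨n, rfl⟩
      exact hbound t (u n)
    · intro b hb
      -- b is an upper bound of the quotients; show ‖G‖ ≤ b
      have hb0 : (0:ℝ) ≤ b := by
        have := hb ⟨0, rfl⟩
        exact le_trans (div_nonneg (norm_nonneg _) (norm_nonneg _)) this
      refine G.opNorm_le_bound hb0 ?_
      intro w
      -- reduce to: ∀ v, ‖f v‖ ≤ b * ‖φ t v‖ by density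
      have hkey : ∀ v : X 0, ‖f v‖ ≤ b * ‖φ (t : ℝ) v‖ := by
        have hclosed : IsClosed {v : X 0 | ‖f v‖ ≤ b * ‖φ (t : ℝ) v‖} :=
          isClosed_le (f.continuous.norm) (continuous_const.mul ((φ (t:ℝ)).continuous.norm))
        have hsub : Set.range u ⊆ {v : X 0 | ‖f v‖ ≤ b * ‖φ (t : ℝ) v‖} := by
          rintro _ ⟨n, rfl⟩
          by_cases hv : φ (t : ℝ) (u n) = 0
          · have hv0 : u n = 0 := by
              have := (φ (t : ℝ)).injective (by simpa using hv)
              simpa using this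
            simp [hv0]
          · have hpos : 0 < ‖φ (t : ℝ) (u n)‖ := norm_pos_iff.mpr hv
            have := hb ⟨n, rfl⟩
            simpa [hq, div_le_iff₀ hpos] using this
        intro v
        have : v ∈ closure (Set.range u) := hdense v
        exact hclosed.closure_subset_iff.mpr hsub this
      have : G w = f ((φ (t : ℝ)).symm w) := rfl
      rw [this]
      have := hkey ((φ (t : ℝ)).symm w)
      simpa using this
  exact Measurable.isLUB hqmeas hislub
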